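/- Let R be a commutative ring and let f₁, …, fₙ be elements of R. The map R → Rⁿ sending r to (r·f₁, …, r·fₙ) is injective if and only if the canonical map from R to the product of the localizations R[1/f₁] × ⋯ × R[1/fₙ] is injective. -/
import Mathlib

private lemma key_aux {R : Type*} [CommRing R] {n : ℕ} (f : Fin n → R)
    (H : ∀ r : R, (∀ i, f i * r = 0) → r = 0) :
    ∀ d : ℕ, ∀ r : R,
      (∀ α : Fin n → ℕ, d ≤ ∑ i, α i → (∏ i, f i ^ α i) * r = 0) → r = 0 := by
  intro d
  induction d with
  | zero =>
    intro r h
    simpa using h 0 (by simp)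
  | succ d ih =>
    intro r h
    apply ih
    intro α hα
    apply H
    intro i
    set e : Fin n → ℕ := Pi.single i 1 with he
    have h1 := h (fun j => α j + e j) ?_
    · have hprod : (∏ j, f j ^ (α j + e j))
          = f i * ∏ j, f j ^ α j := by
        simp only [pow_add]
        rw [Finset.prod_mul_distrib]
        have : (∏ j, f j ^ e j) = f i := by
          simp [he, Pi.single_apply, pow_ite]
        rw [this, mul_comm]
      rw [hprod, mul_assoc] at h1
      exact h1
    · have : ∑ j, (α j + e j) = (∑ j, α j) + 1 := by
        rw [Finset.sum_add_distrib]
        have : ∑ j, e j = 1 := by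
          simp [he, Pi.single_apply]
        omega
      simp only [this]
      omega

/-- Let `R` be a commutative ring and `f₁, …, fₙ ∈ R`. The map `R → Rⁿ`,
`r ↦ (r·f₁, …, r·fₙ)` is injective if and only if the canonical map from `R` to the
product of the localizations `R[1/f₁] × ⋯ × R[1/fₙ]` is injective. -/
theorem schematic_density_criterion {R : Type*} [CommRing R] {n : ℕ} (f : Fin n → R) :
    Function.Injective (fun r : R => fun i : Fin n => r * f i) ↔
    Function.Injective
      (fun r : R => fun i : Fin n => algebraMap R (Localization.Away (f i)) r) := by
  constructor
  · intro H
    have H' : ∀ r : R, (∀ i, f i * r = 0) → r = 0 := by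
      intro r hr
      have : (fun i : Fin n => r * f i) = (fun i : Fin n => (0 : R) * f i) := by
        funext i; rw [mul_comm]; simp [hr i]
      simpa using H this
    intro a b hab
    have hr : ∀ i, ∃ m : ℕ, f i ^ m * (a - b) = 0 := by
      intro i
      have : algebraMap R (Localization.Away (f i)) (a - b) = 0 := by
        have := congrFun hab i
        simp only at this
        rw [map_sub, this, sub_self]
      rw [IsLocalization.map_eq_zero_iff (Submonoid.powers (f i))] at this
      obtain ⟨⟨m, k, hk⟩, hm⟩ := this
      refine ⟨k, ?_⟩
      have hm' : m * (a - b) = 0 := hm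
      rw [← hk] at hm'
      simpa using hm'
    choose m hm using hr
    have : a - b = 0 := by
      apply key_aux f H' ((∑ i, m i) + 1)
      intro α hα
      have : ∃ j, m j < α j := by
        by_contra hc
        push_neg at hc
        have : ∑ i, α i ≤ ∑ i, m i := Finset.sum_le_sum fun i _ => hc i
        omega
      obtain ⟨j, hj⟩ := this
      have hj0 : f j ^ α j * (a - b) = 0 := by
        have : f j ^ α j = f j ^ (α j - m j) * f j ^ m j := by
          rw [← pow_add]; congr 1; omega
        rw [this, mul_assoc, hm j, mul_zero]
      have hsplit : (∏ i, f i ^ α i) * (a - b)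
          = (∏ x ∈ Finset.univ.erase j, f x ^ α x) * (f j ^ α j * (a - b)) := by
        rw [← Finset.mul_prod_erase _ _ (Finset.mem_univ j)]; ring
      rw [hsplit, hj0, mul_zero]
    exact sub_eq_zero.mp this
  · intro H a b hab
    apply H
    funext i
    have h1 : f i * (a - b) = 0 := by
      have := congrFun hab i
      simp only at this
      rw [mul_sub, mul_comm, this, mul_comm, sub_self]
    have : algebraMap R (Localization.Away (f i)) (a - b) = 0 := by
      rw [IsLocalization.map_eq_zero_iff (Submonoid.powers (f i))]
      exact ⟨⟨f i, 1, pow_one _⟩, h1⟩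
    simp only
    rw [← sub_eq_zero, ← map_sub, this]
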